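/- Let H be a real inner product space with bilinear forms t, s satisfying ‖u‖² ≤ t(u,u) and s(u,v) ≤ ρ‖u‖‖v‖ with 0 ≤ ρ < 1, and let R₀ : H → H be linear with t(R₀v + v, w) = s(v, w) for all v, w. If u solves t(u,v) = s(u,v) + ℓ(v) for all v (with ℓ a linear functional), and R(w) ∈ H is defined by t(R(w), v) = ℓ(v) − t(w,v) + s(w,v) for all v, then for every w ∈ H, ‖u − w‖ ≤ ‖R(w)‖/(1−ρ). -/
import Mathlib


/-- Error–residual bound (Lemma 3.3): if `u` solves `t u v = s u v + ℓ v` and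
`R w` is the preconditioned residual, `t (R w) v = ℓ v - t w v + s w v`, then
`‖u - w‖ ≤ ‖R w‖ / (1 - ρ)`. -/
theorem error_residual_bound
    {H : Type*} [NormedAddCommGroup H] [InnerProductSpace ℝ H]
    (t s : H →ₗ[ℝ] H →ₗ[ℝ] ℝ) (ρ : ℝ) (hρ0 : 0 ≤ ρ) (hρ1 : ρ < 1)
    (ht : ∀ u : H, ‖u‖ ^ 2 ≤ t u u)
    (hs : ∀ u v : H, s u v ≤ ρ * ‖u‖ * ‖v‖)
    (R₀ : H →ₗ[ℝ] H)
    (hR₀ : ∀ v w : H, t (R₀ v + v) w = s v w)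
    (ℓ : H →ₗ[ℝ] ℝ) (u : H)
    (hu : ∀ v : H, t u v = s u v + ℓ v)
    (R : H → H)
    (hR : ∀ w v : H, t (R w) v = ℓ v - t w v + s w v) :
    ∀ w : H, ‖u - w‖ ≤ ‖R w‖ / (1 - ρ) := by
  intro w
  set e : H := u - w with he
  -- t (R w) v = t e v - s e v
  have h2 : ∀ v : H, t (R w) v = t e v - s e v := by
    intro v
    have := hR w v
    have hu' := hu v
    simp only [he, map_sub, LinearMap.sub_apply]
    linarith
  -- t (R₀ e) v = s e v - t e v
  have h1 : ∀ v : H, t (R₀ e) v = s e v - t e v := by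
    intro v
    have := hR₀ e v
    simp only [map_add, LinearMap.add_apply] at this
    linarith
  -- R₀ e + R w = 0
  have h3 : R₀ e + R w = 0 := by
    have hz : t (R₀ e + R w) (R₀ e + R w) = 0 := by
      have expand : t (R₀ e + R w) = t (R₀ e) + t (R w) := map_add t _ _
      rw [expand, LinearMap.add_apply]
      have a := h1 (R₀ e + R w)
      have b := h2 (R₀ e + R w)
      linarith
    have hcoer := ht (R₀ e + R w)
    rw [hz] at hcoer
    have : ‖R₀ e + R w‖ = 0 := by nlinarith [norm_nonneg (R₀ e + R w)]
    exact norm_eq_zero.mp this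
  -- so e - R w = R₀ e + e
  have h4 : e - R w = R₀ e + e := by
    have hrw : R w = -(R₀ e) := eq_neg_of_add_eq_zero_right h3
    rw [hrw]; abel
  -- ‖e - R w‖² ≤ ρ ‖e‖ ‖e - R w‖
  have h5 : ‖e - R w‖ ^ 2 ≤ ρ * ‖e‖ * ‖e - R w‖ := by
    have := ht (e - R w)
    have ht' : t (e - R w) (e - R w) = s e (e - R w) := by
      have := hR₀ e (e - R w)
      rw [← h4] at this
      exact this
    calc ‖e - R w‖ ^ 2 ≤ t (e - R w) (e - R w) := ht _
      _ = s e (e - R w) := ht'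
      _ ≤ ρ * ‖e‖ * ‖e - R w‖ := hs e (e - R w)
  have h6 : ‖e - R w‖ ≤ ρ * ‖e‖ := by
    rcases eq_or_lt_of_le (norm_nonneg (e - R w)) with h | h
    · rw [← h]; positivity
    · nlinarith
  have h7 : ‖e‖ ≤ ‖R w‖ + ρ * ‖e‖ := by
    calc ‖e‖ = ‖R w + (e - R w)‖ := by rw [add_sub_cancel]
      _ ≤ ‖R w‖ + ‖e - R w‖ := norm_add_le _ _
      _ ≤ ‖R w‖ + ρ * ‖e‖ := by linarith
  rw [le_div_iff₀ (by linarith)]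
  linarith
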